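/- For every binary word w, the maximum score J(w) of any fold of w in the 2D rectangular lattice satisfies J(w) ≤ Z(w) + 1, where Z(w) is the number of zeros in w. -/
import Mathlib


/-- L¹ distance on ℤ². -/
def d2 (p q : ℤ × ℤ) : ℕ := (p.1 - q.1).natAbs + (p.2 - q.2).natAbs

/-- Adjacency in the 2D rectangular lattice. -/
def adj2 (p q : ℤ × ℤ) : Prop := d2 p q = 1

/-- Adjacency in the hexagonal (3-regular, brick-wall) lattice. -/
def hexAdj (p q : ℤ × ℤ) : Prop :=
  (p.2 = q.2 ∧ (p.1 - q.1).natAbs = 1) ∨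
  (p.1 = q.1 ∧ ((q.2 = p.2 + 1 ∧ (p.1 + p.2) % 2 = 0) ∨ (p.2 = q.2 + 1 ∧ (q.1 + q.2) % 2 = 0)))

/-- A fold (self-avoiding walk) of a binary word `w` on a lattice with adjacency `A`:
letters `false` = hydrophobic (0), `true` = polar (1). -/
def IsFold (A : ℤ × ℤ → ℤ × ℤ → Prop) (w : List Bool) (F : Fin w.length → ℤ × ℤ) : Prop :=
  Function.Injective F ∧
    ∀ (i : ℕ) (h : i + 1 < w.length), A (F ⟨i, by omega⟩) (F ⟨i + 1, h⟩)

/-- The score of a fold: the number of (unordered) pairs of non-consecutive positions,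
both labeled 0, whose images are adjacent. -/
noncomputable def score (A : ℤ × ℤ → ℤ × ℤ → Prop) (w : List Bool) (F : Fin w.length → ℤ × ℤ) : ℕ :=
  Set.ncard {p : Fin w.length × Fin w.length |
    p.1.1 + 2 ≤ p.2.1 ∧ w.get p.1 = false ∧ w.get p.2 = false ∧ A (F p.1) (F p.2)}

/-- The optimal score over all folds of `w`. -/
noncomputable def J (A : ℤ × ℤ → ℤ × ℤ → Prop) (w : List Bool) : ℕ :=
  sSup {s | ∃ F, IsFold A w F ∧ score A w F = s}


instance : DecidableRel adj2 := fun p q => by unfold adj2; infer_instance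

lemma adj2_symm {p q : ℤ × ℤ} (h : adj2 p q) : adj2 q p := by
  unfold adj2 d2 at *; omega

def nbr (p : ℤ × ℤ) : Finset (ℤ × ℤ) := {(p.1+1,p.2),(p.1-1,p.2),(p.1,p.2+1),(p.1,p.2-1)}

lemma card_nbr_le (p : ℤ × ℤ) : (nbr p).card ≤ 4 := by
  unfold nbr
  refine (Finset.card_insert_le _ _).trans ?_
  refine Nat.add_le_add_right ((Finset.card_insert_le _ _).trans ?_) 1
  refine Nat.add_le_add_right ((Finset.card_insert_le _ _).trans ?_) 1
  simp

lemma adj_mem_nbr {p q : ℤ × ℤ} (h : adj2 p q) : q ∈ nbr p := by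
  unfold adj2 d2 at h
  rcases q with ⟨a,b⟩; rcases p with ⟨c,d⟩
  simp only at h
  have : (a = c+1 ∧ b = d) ∨ (a = c-1 ∧ b = d) ∨ (a = c ∧ b = d+1) ∨ (a = c ∧ b = d-1) := by omega
  rcases this with ⟨h1,h2⟩|⟨h1,h2⟩|⟨h1,h2⟩|⟨h1,h2⟩ <;> subst h1 <;> subst h2 <;> simp [nbr]

lemma count_aux (w : List Bool) :
    (Finset.univ.filter fun i : Fin w.length => w.get i = false).card = w.count false := by
  induction w with
  | nil => simp
  | cons a l ih =>
    rw [List.count_cons, ← ih]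
    show (Finset.univ.filter fun i : Fin (l.length+1) => (a::l).get i = false).card = _
    rw [Fin.card_filter_univ_succ' (p := fun i : Fin (l.length+1) => (a::l).get i = false)]
    simp only [List.get_eq_getElem, Fin.val_succ, List.getElem_cons_succ, Fin.val_zero,
      List.getElem_cons_zero, beq_iff_eq]
    cases a <;> simp [add_comm]


/-- For every binary word `w`, the optimal 2D rectangular-lattice fold score satisfies
`J(w) ≤ Z(w) + 1`. -/
theorem stmt4 (w : List Bool) : J adj2 w ≤ w.count false + 1 := by
  apply csSup_le'
  rintro s ⟨F, ⟨hinj, hadj⟩, rfl⟩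
  classical
  set S : Finset (Fin w.length × Fin w.length) := Finset.univ.filter (fun p =>
    p.1.1 + 2 ≤ p.2.1 ∧ w.get p.1 = false ∧ w.get p.2 = false ∧ adj2 (F p.1) (F p.2)) with hS
  have hscore : score adj2 w F = S.card := by
    rw [score, ← Set.ncard_coe_finset]
    congr 1
    ext p
    simp [hS]
  rw [hscore]
  by_cases hn3 : w.length < 3
  · have hSe : S = ∅ := by
      rw [Finset.eq_empty_iff_forall_notMem]
      intro p hp
      simp only [hS, Finset.mem_filter] at hp
      have := p.2.isLt
      omega
    simp [hSe]
  push_neg at hn3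
  set U : Finset (Fin w.length × Fin w.length) := S ∪ S.image Prod.swap with hU
  have hdisj : Disjoint S (S.image Prod.swap) := by
    rw [Finset.disjoint_left]
    rintro p hp hq
    simp only [Finset.mem_image] at hq
    obtain ⟨q, hq, rfl⟩ := hq
    simp only [hS, Finset.mem_filter, Prod.fst_swap, Prod.snd_swap] at hp hq
    omega
  have hUcard : U.card = 2 * S.card := by
    rw [hU, Finset.card_union_of_disjoint hdisj,
      Finset.card_image_of_injective _ Prod.swap_injective]
    omega
  have hmemU : ∀ p : Fin w.length × Fin w.length, p ∈ U →
      w.get p.1 = false ∧ w.get p.2 = false ∧ adj2 (F p.1) (F p.2) ∧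
      (p.1.1 + 2 ≤ p.2.1 ∨ p.2.1 + 2 ≤ p.1.1) := by
    intro p hp
    rw [hU, Finset.mem_union] at hp
    rcases hp with hp | hp
    · simp only [hS, Finset.mem_filter] at hp
      exact ⟨hp.2.2.1, hp.2.2.2.1, hp.2.2.2.2, Or.inl hp.2.1⟩
    · simp only [Finset.mem_image] at hp
      obtain ⟨q, hq, rfl⟩ := hp
      simp only [hS, Finset.mem_filter] at hq
      exact ⟨hq.2.2.2.1, hq.2.2.1, adj2_symm hq.2.2.2.2, Or.inr hq.2.1⟩
  have hfib : ∀ i : Fin w.length, (U.filter fun p => p.1 = i).card ≤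
      (if w.get i = false then 2 else 0) + (if i.1 = 0 ∨ i.1 + 1 = w.length then 1 else 0) := by
    intro i
    by_cases hz : w.get i = false
    case neg =>
      have he : (U.filter fun p => p.1 = i) = ∅ := by
        rw [Finset.eq_empty_iff_forall_notMem]
        rintro p hp
        rw [Finset.mem_filter] at hp
        exact hz (hp.2 ▸ (hmemU p hp.1).1)
      simp [he]
    case pos =>
      have hcard : (U.filter fun p => p.1 = i).card
          = ((U.filter fun p => p.1 = i).image fun p => F p.2).card := by
        rw [Finset.card_image_of_injOn]
        rintro p hp q hq hpq
        rw [Finset.mem_coe, Finset.mem_filter] at hp hq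
        exact Prod.ext (hp.2.trans hq.2.symm) (hinj hpq)
      have hsub0 : ∀ p ∈ U.filter fun p => p.1 = i, F p.2 ∈ nbr (F i) := by
        intro p hp
        rw [Finset.mem_filter] at hp
        have h := (hmemU p hp.1).2.2.1
        rw [hp.2] at h
        exact adj_mem_nbr h
      have key : ∀ (D : Finset (ℤ × ℤ)), D ⊆ nbr (F i) →
          (∀ p ∈ U.filter fun p => p.1 = i, F p.2 ∉ D) →
          (U.filter fun p => p.1 = i).card ≤ 4 - D.card := by
        intro D hD hDnot
        rw [hcard]
        have hsub : ((U.filter fun p => p.1 = i).image fun p => F p.2) ⊆ nbr (F i) \ D := by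
          intro x hx
          simp only [Finset.mem_image] at hx
          obtain ⟨p, hp, rfl⟩ := hx
          exact Finset.mem_sdiff.2 ⟨hsub0 p hp, hDnot p hp⟩
        calc _ ≤ (nbr (F i) \ D).card := Finset.card_le_card hsub
          _ = (nbr (F i)).card - D.card := Finset.card_sdiff_of_subset hD
          _ ≤ 4 - D.card := by have := card_nbr_le (F i); omega
      -- facts about neighbors given they exist
      have hnonconsec : ∀ p ∈ U.filter fun p => p.1 = i,
          p.2.1 + 2 ≤ i.1 ∨ i.1 + 2 ≤ p.2.1 := by
        intro p hp
        rw [Finset.mem_filter] at hp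
        have := (hmemU p hp.1).2.2.2
        rw [hp.2] at this
        omega
      by_cases h0 : i.1 = 0
      · -- left endpoint, use right neighbor
        have hb : i.1 + 1 < w.length := by omega
        set b : Fin w.length := ⟨i.1 + 1, hb⟩ with hbdef
        have hbmem : F b ∈ nbr (F i) := by
          have := hadj i.1 hb
          have hi : (⟨i.1, by omega⟩ : Fin w.length) = i := by exact Fin.ext rfl
          rw [hi] at this
          exact adj_mem_nbr this
        have hle := key {F b} (by simp [hbmem]) (by
          intro p hp hmem
          rw [Finset.mem_singleton] at hmem
          have := hinj hmem
          have h2 := hnonconsec p hp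
          rw [this] at h2
          simp only [hbdef] at h2
          omega)
        simp only [Finset.card_singleton] at hle
        rw [if_pos hz, if_pos (Or.inl h0)]
        omega
      · by_cases hlast : i.1 + 1 = w.length
        · -- right endpoint, use left neighbor
          have ha1 : 1 ≤ i.1 := by omega
          set a : Fin w.length := ⟨i.1 - 1, by omega⟩ with hadef
          have hamem : F a ∈ nbr (F i) := by
            have h := hadj (i.1 - 1) (by omega)
            have hi : (⟨i.1 - 1 + 1, by omega⟩ : Fin w.length) = i := Fin.ext (by simp; omega)
            rw [hi] at h
            exact adj_mem_nbr (adj2_symm h)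
          have hle := key {F a} (by simp [hamem]) (by
            intro p hp hmem
            rw [Finset.mem_singleton] at hmem
            have := hinj hmem
            have h2 := hnonconsec p hp
            rw [this] at h2
            simp only [hadef] at h2
            omega)
          simp only [Finset.card_singleton] at hle
          rw [if_pos hz, if_pos (Or.inr hlast)]
          omega
        · -- interior
          have ha1 : 1 ≤ i.1 := by omega
          have hb : i.1 + 1 < w.length := by have := i.isLt; omega
          set a : Fin w.length := ⟨i.1 - 1, by omega⟩ with hadef
          set b : Fin w.length := ⟨i.1 + 1, hb⟩ with hbdef
          have hamem : F a ∈ nbr (F i) := by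
            have h := hadj (i.1 - 1) (by omega)
            have hi : (⟨i.1 - 1 + 1, by omega⟩ : Fin w.length) = i := Fin.ext (by simp; omega)
            rw [hi] at h
            exact adj_mem_nbr (adj2_symm h)
          have hbmem : F b ∈ nbr (F i) := by
            have h := hadj i.1 hb
            have hi : (⟨i.1, by omega⟩ : Fin w.length) = i := Fin.ext rfl
            rw [hi] at h
            exact adj_mem_nbr h
          have hab : F a ≠ F b := by
            intro h
            have := hinj h
            rw [hadef, hbdef] at this
            have h2 := Fin.val_eq_of_eq this
            simp only [hadef, hbdef] at h2
            omega
          have hle := key {F a, F b} (by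
            intro x hx
            simp only [Finset.mem_insert, Finset.mem_singleton] at hx
            rcases hx with rfl | rfl
            · exact hamem
            · exact hbmem) (by
            intro p hp hmem
            simp only [Finset.mem_insert, Finset.mem_singleton] at hmem
            have h2 := hnonconsec p hp
            rcases hmem with hmem | hmem
            · have := hinj hmem
              rw [this] at h2
              simp only [hadef] at h2
              omega
            · have := hinj hmem
              rw [this] at h2
              simp only [hbdef] at h2
              omega)
          have hcard2 : ({F a, F b} : Finset (ℤ × ℤ)).card = 2 := by
            rw [Finset.card_insert_of_notMem (by simpa using hab), Finset.card_singleton]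
          rw [hcard2] at hle
          rw [if_pos hz]
          omega
  have hsumfib : U.card = ∑ i : Fin w.length, (U.filter fun p => p.1 = i).card :=
    Finset.card_eq_sum_card_fiberwise (fun p _ => Finset.mem_univ p.1)
  have hsum1 : ∑ i : Fin w.length, (if w.get i = false then (2:ℕ) else 0)
      = 2 * (Finset.univ.filter fun i : Fin w.length => w.get i = false).card := by
    rw [Finset.card_filter]
    rw [Finset.mul_sum]
    apply Finset.sum_congr rfl
    intro i _
    split_ifs <;> simp
  have hsum2 : ∑ i : Fin w.length, (if i.1 = 0 ∨ i.1 + 1 = w.length then (1:ℕ) else 0) ≤ 2 := by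
    rw [← Finset.card_filter]
    have hsub : (Finset.univ.filter fun i : Fin w.length => i.1 = 0 ∨ i.1 + 1 = w.length)
        ⊆ {⟨0, by omega⟩, ⟨w.length - 1, by omega⟩} := by
      intro i hi
      rw [Finset.mem_filter] at hi
      simp only [Finset.mem_insert, Finset.mem_singleton]
      rcases hi.2 with h | h
      · exact Or.inl (Fin.ext h)
      · exact Or.inr (Fin.ext (by simp; omega))
    calc _ ≤ _ := Finset.card_le_card hsub
      _ ≤ _ := (Finset.card_insert_le _ _).trans (by simp)
  have hZ := count_aux w
  have hmain : 2 * S.card ≤ 2 * w.count false + 2 := by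
    rw [← hUcard, hsumfib]
    calc ∑ i : Fin w.length, (U.filter fun p => p.1 = i).card
        ≤ ∑ i : Fin w.length, ((if w.get i = false then 2 else 0) + (if i.1 = 0 ∨ i.1 + 1 = w.length then 1 else 0)) :=
          Finset.sum_le_sum fun i _ => hfib i
      _ = (∑ i : Fin w.length, (if w.get i = false then (2:ℕ) else 0))
          + ∑ i : Fin w.length, (if i.1 = 0 ∨ i.1 + 1 = w.length then (1:ℕ) else 0) := Finset.sum_add_distrib
      _ ≤ 2 * w.count false + 2 := by rw [hsum1, hZ]; omega
  omega
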